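/- For any color tuple k : Fin n → ℕ and filter tuple σ : Fin n → Set ℕ, the set of (k,σ)-adapted partitions of Fin n that refine a given partition R is nonempty (it contains the partition into singletons) and has a greatest element with respect to the refinement order; i.e., there exists a unique (k,σ)-adapted partition R(k,σ) refining R such that every (k,σ)-adapted partition refining R also refines R(k,σ). -/

import Mathlib

open Finset

/-- A partition `R` of `Fin n` is `(k,σ)`-adapted if
(A1) the color function `k` is constant on each block, and
(A2) whenever `i < m < j` with `i, j` in a block `B` and `m ∉ B`, then `k i ∈ σ m`. -/
def IsAdapted {n : ℕ} (R : Finpartition (Finset.univ : Finset (Fin n)))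
    (k : Fin n → ℕ) (σ : Fin n → Set ℕ) : Prop :=
  (∀ B ∈ R.parts, ∀ i ∈ B, ∀ j ∈ B, k i = k j) ∧
  (∀ B ∈ R.parts, ∀ i ∈ B, ∀ j ∈ B, ∀ m : Fin n, i < m → m < j → m ∉ B → k i ∈ σ m)

section Aux

variable {n : ℕ} (k : Fin n → ℕ) (σ : Fin n → Set ℕ)
  (R : Finpartition (Finset.univ : Finset (Fin n)))

lemma part_subset_of_le {P Q : Finpartition (Finset.univ : Finset (Fin n))} (h : P ≤ Q)
    (a : Fin n) : P.part a ⊆ Q.part a := by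
  obtain ⟨t, ht, hsub⟩ := h (P.part_mem.2 (mem_univ a))
  have : Q.part a = t := Q.part_eq_of_mem ht (hsub (P.mem_part (mem_univ a)))
  rwa [this]

/-- One step: `i, j` lie in a common part of some adapted refinement of `R`. -/
def AdRel (i j : Fin n) : Prop :=
  ∃ P : Finpartition (Finset.univ : Finset (Fin n)),
    P ≤ R ∧ IsAdapted P k σ ∧ j ∈ P.part i

lemma adRel_symm : Symmetric (AdRel k σ R) := by
  rintro i j ⟨P, h1, h2, h3⟩
  refine ⟨P, h1, h2, ?_⟩
  have h4 := (P.mem_part_iff_part_eq_part (mem_univ j) (mem_univ i)).1 h3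
  exact (P.mem_part_iff_part_eq_part (mem_univ i) (mem_univ j)).2 h4.symm

/-- The setoid generated by all adapted refinements of `R`. -/
def AdSetoid : Setoid (Fin n) :=
  ⟨Relation.ReflTransGen (AdRel k σ R),
    fun _ => Relation.ReflTransGen.refl,
    fun h => (@Relation.ReflTransGen.stdSymm _ _ ⟨adRel_symm k σ R⟩).symm _ _ h,
    Relation.ReflTransGen.trans⟩

/-- Along a chain, the color `k` and the `R`-part are constant. -/
lemma chain_const {a b : Fin n} (h : Relation.ReflTransGen (AdRel k σ R) a b) :
    k a = k b ∧ R.part a = R.part b := by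
  induction h with
  | refl => exact ⟨rfl, rfl⟩
  | @tail c d hac hcd ih =>
      obtain ⟨P, hPR, hPad, hmem⟩ := hcd
      constructor
      · refine ih.1.trans (hPad.1 _ (P.part_mem.2 (mem_univ c)) c (P.mem_part (mem_univ c)) d hmem)
      · refine ih.2.trans ?_
        have hd : d ∈ R.part c := part_subset_of_le hPR c hmem
        exact (R.part_eq_of_mem (R.part_mem.2 (mem_univ c)) hd).symm

/-- Crossing lemma: a chain from below `m` to above `m`, avoiding `m`, must contain a
single step straddling `m`. -/
lemma chain_cross {m : Fin n} : ∀ {a b : Fin n},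
    Relation.ReflTransGen (AdRel k σ R) a b →
    (∀ x, Relation.ReflTransGen (AdRel k σ R) a x → x ≠ m) →
    a < m → m < b →
    ∃ x y, Relation.ReflTransGen (AdRel k σ R) a x ∧ AdRel k σ R x y ∧
      ((x < m ∧ m < y) ∨ (y < m ∧ m < x)) := by
  intro a b hab
  induction hab with
  | refl => intro _ h1 h2; exact absurd rfl (ne_of_lt (h1.trans h2))
  | @tail c d hac hcd ih =>
      intro hne h1 h2
      rcases lt_trichotomy c m with hc | hc | hc
      · exact ⟨c, d, hac, hcd, Or.inl ⟨hc, h2⟩⟩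
      · exact absurd hc (hne c hac)
      · obtain ⟨x, y, hx, hxy, hcase⟩ := ih hne h1 hc
        exact ⟨x, y, hx, hxy, hcase⟩

/-- The greatest adapted refinement of `R`. -/
noncomputable def AdPart : Finpartition (Finset.univ : Finset (Fin n)) :=
  letI := Classical.decRel (AdSetoid k σ R).r
  Finpartition.ofSetoid (AdSetoid k σ R)

lemma mem_adPart {a b : Fin n} :
    b ∈ (AdPart k σ R).part a ↔ Relation.ReflTransGen (AdRel k σ R) a b := by
  letI := Classical.decRel (AdSetoid k σ R).r
  exact Finpartition.mem_part_ofSetoid_iff_rel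

lemma adPart_le : AdPart k σ R ≤ R := by
  intro B hB
  obtain ⟨a, ha⟩ := (AdPart k σ R).nonempty_of_mem_parts hB
  have hBa : (AdPart k σ R).part a = B := (AdPart k σ R).part_eq_of_mem hB ha
  refine ⟨R.part a, R.part_mem.2 (mem_univ a), ?_⟩
  intro b hb
  rw [← hBa, mem_adPart] at hb
  have := (chain_const k σ R hb).2
  rw [this]
  exact R.mem_part (mem_univ b)

lemma adPart_adapted : IsAdapted (AdPart k σ R) k σ := by
  constructor
  · intro B hB i hi j hj
    have hBi : (AdPart k σ R).part i = B := (AdPart k σ R).part_eq_of_mem hB hi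
    rw [← hBi, mem_adPart] at hj
    exact (chain_const k σ R hj).1
  · intro B hB i hi j hj m him hmj hm
    have hBi : (AdPart k σ R).part i = B := (AdPart k σ R).part_eq_of_mem hB hi
    have hij : Relation.ReflTransGen (AdRel k σ R) i j := by
      rw [← hBi, mem_adPart] at hj; exact hj
    have hne : ∀ x, Relation.ReflTransGen (AdRel k σ R) i x → x ≠ m := by
      intro x hx hxm
      apply hm
      rw [← hBi, ← hxm]
      exact (mem_adPart k σ R).2 hx
    obtain ⟨x, y, hx, ⟨P, hPR, hPad, hy⟩, hcase⟩ := chain_cross k σ R hij hne him hmj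
    have hkix : k i = k x := (chain_const k σ R hx).1
    have hxB' : x ∈ P.part x := P.mem_part (mem_univ x)
    have hB'mem : P.part x ∈ P.parts := P.part_mem.2 (mem_univ x)
    have hmB' : m ∉ P.part x := by
      intro hmB'
      exact hne m (hx.tail ⟨P, hPR, hPad, hmB'⟩) rfl
    rcases hcase with ⟨hxm, hmy⟩ | ⟨hym, hmx⟩
    · rw [hkix]
      exact hPad.2 _ hB'mem x hxB' y hy m hxm hmy hmB'
    · have : k x = k y := hPad.1 _ hB'mem x hxB' y hy
      rw [hkix, this]
      exact hPad.2 _ hB'mem y hy x hxB' m hym hmx hmB'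

lemma le_adPart {P : Finpartition (Finset.univ : Finset (Fin n))}
    (hPR : P ≤ R) (hPad : IsAdapted P k σ) : P ≤ AdPart k σ R := by
  intro B hB
  obtain ⟨a, ha⟩ := P.nonempty_of_mem_parts hB
  have hBa : P.part a = B := P.part_eq_of_mem hB ha
  refine ⟨(AdPart k σ R).part a, (AdPart k σ R).part_mem.2 (mem_univ a), ?_⟩
  intro b hb
  rw [mem_adPart]
  exact Relation.ReflTransGen.single ⟨P, hPR, hPad, hBa ▸ hb⟩

end Aux

/-- the set of (k,σ)-adapted refinements of any partition `R` of `Fin n` is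
nonempty (the partition into singletons, i.e. `⊥`, is adapted and refines `R`) and has a
unique greatest element w.r.t. the refinement order. -/
theorem stmt2 (n : ℕ) (k : Fin n → ℕ) (σ : Fin n → Set ℕ)
    (R : Finpartition (Finset.univ : Finset (Fin n))) :
    IsAdapted (⊥ : Finpartition (Finset.univ : Finset (Fin n))) k σ ∧
    (⊥ : Finpartition (Finset.univ : Finset (Fin n))) ≤ R ∧
    ∃! R' : Finpartition (Finset.univ : Finset (Fin n)),
      R' ≤ R ∧ IsAdapted R' k σ ∧
        ∀ R'' : Finpartition (Finset.univ : Finset (Fin n)),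
          R'' ≤ R → IsAdapted R'' k σ → R'' ≤ R' := by
  refine ⟨?_, bot_le, ?_⟩
  · constructor
    · intro B hB i hi j hj
      rw [Finpartition.mem_bot_iff] at hB
      obtain ⟨a, _, rfl⟩ := hB
      simp only [mem_singleton] at hi hj
      rw [hi, hj]
    · intro B hB i hi j hj m him hmj _
      rw [Finpartition.mem_bot_iff] at hB
      obtain ⟨a, _, rfl⟩ := hB
      simp only [mem_singleton] at hi hj
      subst hi hj
      exact absurd (him.trans hmj) (lt_irrefl _)
  · refine ⟨AdPart k σ R, ⟨adPart_le k σ R, adPart_adapted k σ R,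
      fun R'' h1 h2 => le_adPart k σ R h1 h2⟩, ?_⟩
    rintro R' ⟨h1, h2, h3⟩
    exact le_antisymm (le_adPart k σ R h1 h2)
      (h3 _ (adPart_le k σ R) (adPart_adapted k σ R))
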